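/- Let Σ=(Γ,σ) be a connected unbalanced signed graph with an orientation ω compatible with σ, let G be a finite additive abelian group, and let f be a G-tension of Σ. Then there exists u ∈ G such that for every closed walk W=(v₁,e₁,…,v_k,e_k,v₁) around an unbalanced cycle of Σ, Σ_{i=1}^k f(e_i) ∈ u + 2G. -/

import Mathlib

attribute [local instance] Classical.propDecidable

noncomputable section SignedGraphs

/-- A signed graph: a multigraph with ordered pairs of endpoints (the order is
an artefact of the encoding) together with a sign `±1` on each edge. -/
structure SGraph (V : Type*) (E : Type*) where
  ends : E → V × V
  sign : E → ℤˣ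

namespace SGraph

variable {V E : Type*}

/-- Endpoint of `e` on side `b`; a loop has both endpoints equal, but its two
half-edges are distinguished by the side `b`. -/
def endpt (Γ : SGraph V E) (e : E) (b : Bool) : V :=
  cond b (Γ.ends e).1 (Γ.ends e).2

/-- `e` is a loop of the underlying graph. -/
def IsLoop (Γ : SGraph V E) (e : E) : Prop := (Γ.ends e).1 = (Γ.ends e).2

/-- Walks in a signed multigraph: a step traverses an edge `e` in direction `d`
(from the side-`d` endpoint to the other endpoint). -/
inductive Walk (Γ : SGraph V E) : V → V → Type _
  | nil (v : V) : Walk Γ v v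
  | cons (e : E) (d : Bool) {w : V} (p : Walk Γ (Γ.endpt e (!d)) w) : Walk Γ (Γ.endpt e d) w

namespace Walk

variable {Γ : SGraph V E}

/-- The list of vertices visited by a walk (including the final one). -/
def verts : ∀ {u v : V}, Γ.Walk u v → List V
  | _, _, .nil x => [x]
  | _, _, .cons e d p => Γ.endpt e d :: p.verts

/-- The list of edges traversed by a walk. -/
def edges : ∀ {u v : V}, Γ.Walk u v → List E
  | _, _, .nil _ => []
  | _, _, .cons e _ p => e :: p.edges

/-- The list of (edge, direction) steps of a walk. -/
def steps : ∀ {u v : V}, Γ.Walk u v → List (E × Bool)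
  | _, _, .nil _ => []
  | _, _, .cons e d p => (e, d) :: p.steps

/-- The sources of the steps of a walk, i.e. all visited vertices except the last. -/
def srcs {u v : V} (W : Γ.Walk u v) : List V := W.verts.dropLast

/-- The sign of a walk: the product of the signs of its edges. -/
def sgn : ∀ {u v : V}, Γ.Walk u v → ℤˣ
  | _, _, .nil _ => 1
  | _, _, .cons e _ p => Γ.sign e * p.sgn

/-- Concatenation of walks. -/
def append : ∀ {u v w : V}, Γ.Walk u v → Γ.Walk v w → Γ.Walk u w
  | _, _, _, .nil _, q => q
  | _, _, _, .cons e d p, q => .cons e d (p.append q)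

/-- The sum `Σᵢ f(eᵢ)` of the values of `f` on the edges of the walk,
with multiplicity. -/
def edgeSum {G : Type*} [AddCommGroup G] (f : E → G) {u v : V} (W : Γ.Walk u v) : G :=
  (W.edges.map f).sum

/-- The sum `Σᵢ ω(vᵢ,eᵢ)·(Π_{j<i} σ(eⱼ))·f(eᵢ)` along a walk, where `ω(vᵢ,eᵢ)`
is the value of `ω` on the half-edge by which the walk leaves `vᵢ`. -/
def tensionSum {G : Type*} [AddCommGroup G] (ω : E → Bool → ℤˣ) (f : E → G) :
    ∀ {u v : V}, Γ.Walk u v → G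
  | _, _, .nil _ => 0
  | _, _, .cons e d p => ((ω e d : ℤ) • f e) + ((Γ.sign e : ℤ) • tensionSum ω f p)

/-- `Q` is the reverse of the walk `P`. -/
def IsReverseOf {u v : V} (Q : Γ.Walk v u) (P : Γ.Walk u v) : Prop :=
  Q.steps = P.steps.reverse.map fun s => (s.1, !s.2)

end Walk

/-- A closed walk is a cycle if it is nontrivial, visits no vertex twice and
uses no edge twice. -/
def IsCycle (Γ : SGraph V E) {v : V} (W : Γ.Walk v v) : Prop :=
  W.edges ≠ [] ∧ W.srcs.Nodup ∧ W.edges.Nodup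

/-- A balanced (positive) cycle. -/
def IsBalancedCycle (Γ : SGraph V E) {v : V} (W : Γ.Walk v v) : Prop :=
  Γ.IsCycle W ∧ W.sgn = 1

/-- An unbalanced (negative) cycle. -/
def IsUnbalancedCycle (Γ : SGraph V E) {v : V} (W : Γ.Walk v v) : Prop :=
  Γ.IsCycle W ∧ W.sgn = -1

/-- A nontrivial walk that is a simple path (all visited vertices distinct). -/
def IsPathWalk (Γ : SGraph V E) {u v : V} (P : Γ.Walk u v) : Prop :=
  P.edges ≠ [] ∧ P.verts.Nodup

/-- A tight handcuff at `v`: two edge-disjoint unbalanced cycles sharing exactly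
the vertex `v`. -/
def IsTightHandcuff (Γ : SGraph V E) {v : V} (C₁ C₂ : Γ.Walk v v) : Prop :=
  Γ.IsUnbalancedCycle C₁ ∧ Γ.IsUnbalancedCycle C₂ ∧
    (∀ x ∈ C₁.srcs, x ∈ C₂.srcs → x = v) ∧ ∀ e ∈ C₁.edges, e ∉ C₂.edges

/-- A loose handcuff: two vertex-disjoint unbalanced cycles `C₁` (at `u`) and
`C₂` (at `w`) joined by a simple path `P` from `u` to `w` meeting the cycles
exactly in its endpoints. -/
def IsLooseHandcuff (Γ : SGraph V E) {u w : V} (C₁ : Γ.Walk u u) (P : Γ.Walk u w)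
    (C₂ : Γ.Walk w w) : Prop :=
  Γ.IsUnbalancedCycle C₁ ∧ Γ.IsUnbalancedCycle C₂ ∧ Γ.IsPathWalk P ∧
    (∀ x ∈ C₁.srcs, x ∉ C₂.srcs) ∧
    (∀ x ∈ P.verts, x ∈ C₁.srcs → x = u) ∧
    (∀ x ∈ P.verts, x ∈ C₂.srcs → x = w) ∧
    ∀ e ∈ P.edges, e ∉ C₁.edges ∧ e ∉ C₂.edges

/-- The canonical closed walks traversing a circuit of the signed graph:
a balanced cycle, a tight handcuff `C₁ * C₂`, or a loose handcuff
`C₁ * P * C₂ * P⁻¹` (the circuit path edges being used twice). -/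
def IsBasicCircuitWalk (Γ : SGraph V E) {v : V} (W : Γ.Walk v v) : Prop :=
  Γ.IsBalancedCycle W ∨
    (∃ C₁ C₂ : Γ.Walk v v, Γ.IsTightHandcuff C₁ C₂ ∧ W = C₁.append C₂) ∨
    ∃ (w : V) (C₁ : Γ.Walk v v) (P : Γ.Walk v w) (C₂ : Γ.Walk w w) (Q : Γ.Walk w v),
      Γ.IsLooseHandcuff C₁ P C₂ ∧ Q.IsReverseOf P ∧
        W = C₁.append (P.append (C₂.append Q))

/-- A circuit walk: a rotation of a basic circuit walk. -/
def IsCircuitWalk (Γ : SGraph V E) {v : V} (W : Γ.Walk v v) : Prop :=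
  ∃ (u : V) (A : Γ.Walk u v) (B : Γ.Walk v u),
    W = B.append A ∧ Γ.IsBasicCircuitWalk (A.append B)

/-- `e` is a circuit path edge: it lies on the connecting path of an unbalanced
loose handcuff. -/
def IsCircuitPathEdge (Γ : SGraph V E) (e : E) : Prop :=
  ∃ (u w : V) (C₁ : Γ.Walk u u) (P : Γ.Walk u w) (C₂ : Γ.Walk w w),
    Γ.IsLooseHandcuff C₁ P C₂ ∧ e ∈ P.edges

/-- Adjacency via an edge. -/
def Adj (Γ : SGraph V E) (a b : V) : Prop := ∃ e, Γ.ends e = (a, b) ∨ Γ.ends e = (b, a)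

/-- The set of connected components. -/
def Components (Γ : SGraph V E) : Type _ := Quot Γ.Adj

/-- The connected component of a vertex. -/
def comp (Γ : SGraph V E) (v : V) : Γ.Components := Quot.mk _ v

/-- The number `k(Γ)` of connected components. -/
def kAll (Γ : SGraph V E) : ℕ := Nat.card Γ.Components

/-- A connected component is balanced if every cycle it contains is balanced. -/
def IsBalancedComponent (Γ : SGraph V E) (c : Γ.Components) : Prop :=
  ∀ v : V, Γ.comp v = c → ∀ W : Γ.Walk v v, Γ.IsCycle W → W.sgn = 1

/-- The number `k_b(Σ)` of balanced connected components. -/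
def kb (Γ : SGraph V E) : ℕ := Nat.card {c : Γ.Components // Γ.IsBalancedComponent c}

/-- The number `k_u(Σ)` of unbalanced connected components. -/
def ku (Γ : SGraph V E) : ℕ := Nat.card {c : Γ.Components // ¬ Γ.IsBalancedComponent c}

/-- A signed graph is balanced if all its cycles are balanced. -/
def Balanced (Γ : SGraph V E) : Prop :=
  ∀ (v : V) (W : Γ.Walk v v), Γ.IsCycle W → W.sgn = 1

/-- A signed graph is connected if it has exactly one connected component. -/
def Connected (Γ : SGraph V E) : Prop := Γ.kAll = 1

/-- The spanning subgraph `Σ \ Aᶜ` with edge set `A`. -/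
def restrict (Γ : SGraph V E) (A : Set E) : SGraph V A :=
  { ends := fun e => Γ.ends e, sign := fun e => Γ.sign e }

/-- The signed Tutte polynomial (as a function of `x`, `y`, `z`):
`T_Σ(X,Y,Z) = Σ_{A⊆E} (X−1)^{k(Σ\Aᶜ)−k(Σ)} (Y−1)^{|A|−|V|+k_b(Σ\Aᶜ)} (Z−1)^{k_u(Σ\Aᶜ)}`. -/
def signedTutte {K : Type*} [CommRing K] (Γ : SGraph V E) (x y z : K) : K :=
  ∑ᶠ A : Finset E,
    (x - 1) ^ ((Γ.restrict (A : Set E)).kAll - Γ.kAll) *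
      (y - 1) ^ ((A.card + (Γ.restrict (A : Set E)).kb) - Nat.card V) *
        (z - 1) ^ (Γ.restrict (A : Set E)).ku

/-- Deletion of an edge. -/
def deleteEdge (Γ : SGraph V E) (e : E) : SGraph V {e' : E // e' ≠ e} :=
  { ends := fun e' => Γ.ends e'.1, sign := fun e' => Γ.sign e'.1 }

/-- The relation identifying the two endpoints of `e`. -/
def contractRel (Γ : SGraph V E) (e : E) (a b : V) : Prop := (a, b) = Γ.ends e

/-- Contraction of an edge: the two endpoints are identified and the edge is
deleted.  (For a loop this is just deletion, as the identification is trivial.) -/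
def contract (Γ : SGraph V E) (e : E) : SGraph (Quot (Γ.contractRel e)) {e' : E // e' ≠ e} :=
  { ends := fun e' => (Quot.mk _ (Γ.ends e'.1).1, Quot.mk _ (Γ.ends e'.1).2),
    sign := fun e' => Γ.sign e'.1 }

/-- `e` is a bridge: its deletion increases the number of connected components. -/
def IsBridge (Γ : SGraph V E) (e : E) : Prop := Γ.kAll < (Γ.deleteEdge e).kAll

/-- An orientation of the half-edges, compatible with the signature. -/
def IsCompatible (Γ : SGraph V E) (ω : E → Bool → ℤˣ) : Prop :=
  ∀ e, Γ.sign e = -(ω e true * ω e false)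

/-- A `G`-flow: Kirchhoff's law holds at every vertex. -/
def IsFlow (Γ : SGraph V E) (ω : E → Bool → ℤˣ) {G : Type*} [AddCommGroup G]
    (f : E → G) : Prop :=
  ∀ v : V,
    (∑ᶠ e : E, ((if Γ.endpt e true = v then (ω e true : ℤ) • f e else 0) +
      (if Γ.endpt e false = v then (ω e false : ℤ) • f e else 0))) = 0

/-- A `G`-tension: the alternating sum along every circuit walk vanishes. -/
def IsTension (Γ : SGraph V E) (ω : E → Bool → ℤˣ) {G : Type*} [AddCommGroup G]
    (f : E → G) : Prop :=
  ∀ (v : V) (W : Γ.Walk v v), Γ.IsCircuitWalk W → W.tensionSum ω f = 0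

end SGraph

/-- The doubling homomorphism `x ↦ x + x = 2x` of an abelian group. -/
def doubleHom (G : Type*) [AddCommGroup G] : G →+ G :=
  AddMonoidHom.mk' (fun x => x + x) (fun a b => add_add_add_comm a b a b)

/-- The subgroup `2G = {2x : x ∈ G}`. -/
def twoG (G : Type*) [AddCommGroup G] : AddSubgroup G := (doubleHom G).range

/-- The `2`-torsion subgroup `G₂ = {x ∈ G : 2x = 0}`. -/
def torsion2 (G : Type*) [AddCommGroup G] : AddSubgroup G := (doubleHom G).ker

namespace SGraph

variable {V E : Type*}

/-- A `G`-potential difference: a `G`-tension whose sum around every unbalanced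
cycle lies in `2G`. -/
def IsPotentialDifference (Γ : SGraph V E) (ω : E → Bool → ℤˣ) {G : Type*} [AddCommGroup G]
    (f : E → G) : Prop :=
  Γ.IsTension ω f ∧
    ∀ (v : V) (W : Γ.Walk v v), Γ.IsUnbalancedCycle W → W.edgeSum f ∈ twoG G

end SGraph

namespace SGraph

variable {V E : Type*}

/-- Proper coloring by elements of a set `X` with involution `ι`: adjacent
endpoints of a positive edge get different colors, and for a negative edge the
`ι`-image of one endpoint's color differs from the other endpoint's color. -/
def IsProperInvColoring (Γ : SGraph V E) {X : Type*} (ι : X → X) (f : V → X) : Prop :=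
  ∀ e : E, (Γ.sign e = 1 → f ((Γ.ends e).1) ≠ f ((Γ.ends e).2)) ∧
    (Γ.sign e = -1 → ι (f ((Γ.ends e).1)) ≠ f ((Γ.ends e).2))

/-- A proper `G`-coloring: for every edge `e = uv`, `f(u) ≠ f(v)` if `e` is
positive and `-f(u) ≠ f(v)` if `e` is negative, i.e. `σ(e)•f(u) ≠ f(v)`. -/
def IsProperColoring (Γ : SGraph V E) {G : Type*} [AddCommGroup G] (f : V → G) : Prop :=
  ∀ e : E, ((Γ.sign e : ℤ) • f ((Γ.ends e).1)) ≠ f ((Γ.ends e).2)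

/-- Zaslavsky's proper `n`-coloring: colors in `{0, ±1, …, ±n}` with
`f(u) ≠ σ(e)·f(v)` for every edge `e = uv`. -/
def IsProperNColoring (Γ : SGraph V E) (n : ℕ) (f : V → ℤ) : Prop :=
  (∀ v, |f v| ≤ (n : ℤ)) ∧
    ∀ e : E, f ((Γ.ends e).1) ≠ (Γ.sign e : ℤ) * f ((Γ.ends e).2)

/-- `T ⊆ E` is a spanning tree: the spanning subgraph `(V,T)` is connected and
contains no cycle. -/
def IsSpanningTree (Γ : SGraph V E) (T : Set E) : Prop :=
  (Γ.restrict T).Connected ∧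
    ∀ (v : V) (W : (Γ.restrict T).Walk v v), ¬ (Γ.restrict T).IsCycle W

/-- A connected basis of a connected signed graph: a spanning tree if `Σ` is
balanced; otherwise a spanning tree plus one extra edge closing an unbalanced
cycle. -/
def IsConnectedBasis (Γ : SGraph V E) (B : Set E) : Prop :=
  (Γ.Balanced ∧ Γ.IsSpanningTree B) ∨
    (¬ Γ.Balanced ∧ ∃ (T : Set E) (e : E), Γ.IsSpanningTree T ∧ e ∉ T ∧ B = insert e T ∧
      ∀ (v : V) (W : (Γ.restrict B).Walk v v), (Γ.restrict B).IsCycle W → W.sgn = -1)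

/-- Switching at a vertex `v`: the sign of every non-loop edge incident with `v`
is negated; loops keep their sign. -/
def switchAt (Γ : SGraph V E) (v : V) : SGraph V E :=
  { ends := Γ.ends,
    sign := fun e => if ((Γ.ends e).1 = v ↔ (Γ.ends e).2 = v) then Γ.sign e else -Γ.sign e }

/-- Switching at a set `S` of vertices (the composite of the switchings at the
vertices of `S`): the sign of an edge is negated iff exactly one of its
endpoints lies in `S`. -/
def switchSet (Γ : SGraph V E) (S : Set V) : SGraph V E :=
  { ends := Γ.ends,
    sign := fun e => if ((Γ.ends e).1 ∈ S ↔ (Γ.ends e).2 ∈ S) then Γ.sign e else -Γ.sign e }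

/-- Isomorphism of signed graphs (as undirected signed multigraphs). -/
def Iso {V₁ E₁ V₂ E₂ : Type*} (Γ₁ : SGraph V₁ E₁) (Γ₂ : SGraph V₂ E₂) : Prop :=
  ∃ (φ : V₁ ≃ V₂) (ψ : E₁ ≃ E₂), ∀ e : E₁,
    (Γ₂.ends (ψ e) = (φ (Γ₁.ends e).1, φ (Γ₁.ends e).2) ∨
      Γ₂.ends (ψ e) = (φ (Γ₁.ends e).2, φ (Γ₁.ends e).1)) ∧
    Γ₂.sign (ψ e) = Γ₁.sign e

/-- Switching equivalence: isomorphism after switching at a set of vertices. -/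
def SwitchEquiv {V₁ E₁ V₂ E₂ : Type*} (Γ₁ : SGraph V₁ E₁) (Γ₂ : SGraph V₂ E₂) : Prop :=
  ∃ S : Set V₁, Iso (Γ₁.switchSet S) Γ₂

/-- Disjoint union of signed graphs. -/
def disjUnion {V₁ E₁ V₂ E₂ : Type*} (Γ₁ : SGraph V₁ E₁) (Γ₂ : SGraph V₂ E₂) :
    SGraph (V₁ ⊕ V₂) (E₁ ⊕ E₂) where
  ends := fun e => match e with
    | .inl e => (Sum.inl (Γ₁.ends e).1, Sum.inl (Γ₁.ends e).2)
    | .inr e => (Sum.inr (Γ₂.ends e).1, Sum.inr (Γ₂.ends e).2)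
  sign := fun e => match e with
    | .inl e => Γ₁.sign e
    | .inr e => Γ₂.sign e

/-- The difference operator `δ : G^V → G^E`,
`(δg)(e) = ω(v,e)·g(v) + ω(u,e)·g(u)` for `e = uv`. -/
def deltaHom (Γ : SGraph V E) (ω : E → Bool → ℤˣ) (G : Type*) [AddCommGroup G] :
    (V → G) →+ (E → G) :=
  AddMonoidHom.mk'
    (fun g e => (ω e true : ℤ) • g ((Γ.ends e).1) + (ω e false : ℤ) • g ((Γ.ends e).2))
    (by
      intro a b
      funext e
      simp only [Pi.add_apply, smul_add]
      abel)

end SGraph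

end SignedGraphs

section Aux

namespace SGraph

variable {V E : Type*} {Γ : SGraph V E}

lemma endpt_or (e : E) (d : Bool) :
    Γ.endpt e d = (Γ.ends e).1 ∨ Γ.endpt e d = (Γ.ends e).2 := by
  cases d <;> simp [endpt]

namespace Walk

lemma verts_eq_cons : ∀ {u w : V} (W : Γ.Walk u w), W.verts = u :: W.verts.tail
  | _, _, .nil v => rfl
  | _, _, .cons e d p => rfl

lemma verts_ne_nil {u w : V} (W : Γ.Walk u w) : W.verts ≠ [] := by
  rw [W.verts_eq_cons]; simp

@[simp] lemma srcs_nil (v : V) : (Walk.nil (Γ := Γ) v).srcs = [] := rfl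

@[simp] lemma edges_nil (v : V) : (Walk.nil (Γ := Γ) v).edges = [] := rfl

@[simp] lemma srcs_cons (e : E) (d : Bool) {w : V} (p : Γ.Walk (Γ.endpt e (!d)) w) :
    (Walk.cons e d p).srcs = Γ.endpt e d :: p.srcs := by
  show (Γ.endpt e d :: p.verts).dropLast = Γ.endpt e d :: p.verts.dropLast
  rw [p.verts_eq_cons]
  rfl

lemma verts_eq_srcs_concat : ∀ {u w : V} (W : Γ.Walk u w), W.verts = W.srcs ++ [w]
  | _, _, .nil v => rfl
  | _, _, .cons e d p => by
    show Γ.endpt e d :: p.verts = _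
    rw [srcs_cons, p.verts_eq_srcs_concat]
    rfl

lemma start_mem_verts {u w : V} (W : Γ.Walk u w) : u ∈ W.verts := by
  rw [W.verts_eq_cons]; exact List.mem_cons_self

lemma end_mem_verts {u w : V} (W : Γ.Walk u w) : w ∈ W.verts := by
  rw [W.verts_eq_srcs_concat]; simp

lemma start_mem_srcs {u w : V} (W : Γ.Walk u w) (h : W.edges ≠ []) : u ∈ W.srcs := by
  cases W with
  | nil v => simp at h
  | cons e d p => rw [srcs_cons]; exact List.mem_cons_self

lemma srcs_subset_verts {u w : V} (W : Γ.Walk u w) : W.srcs ⊆ W.verts := by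
  rw [W.verts_eq_srcs_concat]; exact fun x hx => List.mem_append_left _ hx

lemma srcs_eq_cons {u w : V} (W : Γ.Walk u w) (h : W.edges ≠ []) :
    W.srcs = u :: W.srcs.tail := by
  cases W with
  | nil v => simp at h
  | cons e d p => simp [srcs_cons]

@[simp] lemma nil_append {u w : V} (q : Γ.Walk u w) : (Walk.nil u).append q = q := rfl

@[simp] lemma append_nil : ∀ {u w : V} (W : Γ.Walk u w), W.append (Walk.nil w) = W
  | _, _, .nil v => rfl
  | _, _, .cons e d p => by
    show Walk.cons e d (p.append (Walk.nil _)) = _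
    rw [append_nil p]

lemma append_assoc : ∀ {u v w x : V} (p : Γ.Walk u v) (q : Γ.Walk v w) (r : Γ.Walk w x),
    (p.append q).append r = p.append (q.append r)
  | _, _, _, _, .nil v, q, r => rfl
  | _, _, _, _, .cons e d p, q, r => by
    show Walk.cons e d ((p.append q).append r) = Walk.cons e d (p.append (q.append r))
    rw [append_assoc p q r]

@[simp] lemma edges_append : ∀ {u v w : V} (p : Γ.Walk u v) (q : Γ.Walk v w),
    (p.append q).edges = p.edges ++ q.edges
  | _, _, _, .nil v, q => rfl
  | _, _, _, .cons e d p, q => by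
    show e :: (p.append q).edges = _
    rw [edges_append p q]; rfl

@[simp] lemma steps_append : ∀ {u v w : V} (p : Γ.Walk u v) (q : Γ.Walk v w),
    (p.append q).steps = p.steps ++ q.steps
  | _, _, _, .nil v, q => rfl
  | _, _, _, .cons e d p, q => by
    show (e, d) :: (p.append q).steps = _
    rw [steps_append p q]; rfl

lemma verts_append : ∀ {u v w : V} (p : Γ.Walk u v) (q : Γ.Walk v w),
    (p.append q).verts = p.srcs ++ q.verts
  | _, _, _, .nil v, q => rfl
  | _, _, _, .cons e d p, q => by
    show Γ.endpt e d :: (p.append q).verts = _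
    rw [verts_append p q, srcs_cons]; rfl

lemma srcs_append {u v w : V} (p : Γ.Walk u v) (q : Γ.Walk v w) :
    (p.append q).srcs = p.srcs ++ q.srcs := by
  have h1 := (p.append q).verts_eq_srcs_concat
  rw [verts_append, q.verts_eq_srcs_concat, ← List.append_assoc] at h1
  exact ((List.append_left_injective _).eq_iff.mp h1).symm

@[simp] lemma sgn_append : ∀ {u v w : V} (p : Γ.Walk u v) (q : Γ.Walk v w),
    (p.append q).sgn = p.sgn * q.sgn
  | _, _, _, .nil v, q => by show q.sgn = 1 * q.sgn; rw [one_mul]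
  | _, _, _, .cons e d p, q => by
    show Γ.sign e * (p.append q).sgn = Γ.sign e * p.sgn * q.sgn
    rw [sgn_append p q, mul_assoc]

lemma edgeSum_append {G : Type*} [AddCommGroup G] (f : E → G) {u v w : V}
    (p : Γ.Walk u v) (q : Γ.Walk v w) :
    (p.append q).edgeSum f = p.edgeSum f + q.edgeSum f := by
  unfold edgeSum
  rw [edges_append, List.map_append, List.sum_append]

end Walk

end SGraph

end Aux
section Aux2

namespace SGraph

variable {V E : Type*} {Γ : SGraph V E}

namespace Walk

/-- Change the endpoints of a walk along equalities. -/
def copy {u v u' v' : V} (W : Γ.Walk u v) (hu : u = u') (hv : v = v') : Γ.Walk u' v' :=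
  hu ▸ hv ▸ W

@[simp] lemma steps_copy {u v u' v' : V} (W : Γ.Walk u v) (hu : u = u') (hv : v = v') :
    (W.copy hu hv).steps = W.steps := by subst hu; subst hv; rfl

@[simp] lemma edges_copy {u v u' v' : V} (W : Γ.Walk u v) (hu : u = u') (hv : v = v') :
    (W.copy hu hv).edges = W.edges := by subst hu; subst hv; rfl

@[simp] lemma verts_copy {u v u' v' : V} (W : Γ.Walk u v) (hu : u = u') (hv : v = v') :
    (W.copy hu hv).verts = W.verts := by subst hu; subst hv; rfl

@[simp] lemma sgn_copy {u v u' v' : V} (W : Γ.Walk u v) (hu : u = u') (hv : v = v') :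
    (W.copy hu hv).sgn = W.sgn := by subst hu; subst hv; rfl

/-- The reverse of a walk. -/
def reverse : ∀ {u w : V}, Γ.Walk u w → Γ.Walk w u
  | _, _, .nil v => .nil v
  | _, _, .cons e d p =>
      p.reverse.append ((Walk.cons e (!d) (Walk.nil _)).copy rfl (by rw [Bool.not_not]))

@[simp] lemma reverse_nil (v : V) : (Walk.nil (Γ := Γ) v).reverse = Walk.nil v := rfl

lemma steps_reverse : ∀ {u w : V} (W : Γ.Walk u w),
    W.reverse.steps = (W.steps.reverse).map fun s => (s.1, !s.2)
  | _, _, .nil v => rfl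
  | _, _, .cons e d p => by
    show (p.reverse.append _).steps = _
    rw [steps_append, steps_reverse p, steps_copy]
    show _ ++ [(e, !d)] = _
    simp [Walk.steps]

lemma edges_eq_steps_map : ∀ {u w : V} (W : Γ.Walk u w), W.edges = W.steps.map Prod.fst
  | _, _, .nil v => rfl
  | _, _, .cons e d p => by
    show e :: p.edges = (e, d).1 :: p.steps.map Prod.fst
    rw [edges_eq_steps_map p]

lemma edges_reverse {u w : V} (W : Γ.Walk u w) : W.reverse.edges = W.edges.reverse := by
  rw [edges_eq_steps_map, steps_reverse, edges_eq_steps_map]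
  simp [List.map_reverse, Function.comp]

lemma verts_reverse : ∀ {u w : V} (W : Γ.Walk u w), W.reverse.verts = W.verts.reverse
  | _, _, .nil v => rfl
  | _, _, .cons e d p => by
    show (p.reverse.append _).verts = _
    rw [verts_append]
    have h1 : p.reverse.srcs = p.verts.reverse.dropLast := by
      show p.reverse.verts.dropLast = _
      rw [verts_reverse p]
    rw [h1, verts_copy]
    show _ ++ [Γ.endpt e (!d), Γ.endpt e (!!d)] = (Γ.endpt e d :: p.verts).reverse
    rw [Bool.not_not]
    conv_rhs => rw [p.verts_eq_cons]
    conv_lhs => rw [p.verts_eq_cons]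
    simp

lemma sgn_eq_prod : ∀ {u w : V} (W : Γ.Walk u w), W.sgn = (W.edges.map Γ.sign).prod
  | _, _, .nil v => rfl
  | _, _, .cons e d p => by
    show Γ.sign e * p.sgn = (Γ.sign e :: p.edges.map Γ.sign).prod
    rw [List.prod_cons, sgn_eq_prod p]

lemma sgn_congr_perm {u w u' w' : V} {W : Γ.Walk u w} {W' : Γ.Walk u' w'}
    (h : W.edges.Perm W'.edges) : W.sgn = W'.sgn := by
  rw [sgn_eq_prod, sgn_eq_prod]
  exact (h.map Γ.sign).prod_eq

lemma edgeSum_congr_perm {G : Type*} [AddCommGroup G] (f : E → G) {u w u' w' : V}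
    {W : Γ.Walk u w} {W' : Γ.Walk u' w'} (h : W.edges.Perm W'.edges) :
    W.edgeSum f = W'.edgeSum f := (h.map f).sum_eq

lemma sgn_reverse {u w : V} (W : Γ.Walk u w) : W.reverse.sgn = W.sgn :=
  sgn_congr_perm (by rw [edges_reverse]; exact List.reverse_perm _)

lemma edgeSum_reverse {G : Type*} [AddCommGroup G] (f : E → G) {u w : V} (W : Γ.Walk u w) :
    W.reverse.edgeSum f = W.edgeSum f :=
  edgeSum_congr_perm f (by rw [edges_reverse]; exact List.reverse_perm _)

lemma reverse_isReverseOf {u w : V} (W : Γ.Walk u w) : W.reverse.IsReverseOf W :=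
  steps_reverse W

/-- Split a walk at the first vertex satisfying a predicate. -/
lemma exists_split_first {u w : V} (W : Γ.Walk u w) (p : V → Prop)
    (h : ∃ x ∈ W.verts, p x) :
    ∃ (c : V) (P : Γ.Walk u c) (S : Γ.Walk c w),
      p c ∧ W = P.append S ∧ ∀ y ∈ P.srcs, ¬ p y := by
  induction W with
  | nil v =>
    obtain ⟨x, hx, hpx⟩ := h
    simp only [Walk.verts, List.mem_singleton] at hx
    subst hx
    exact ⟨_, .nil _, .nil _, hpx, rfl, by simp⟩
  | cons e d q ih =>
    by_cases hp : p (Γ.endpt e d)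
    · exact ⟨_, .nil _, .cons e d q, hp, rfl, by simp⟩
    · have h' : ∃ x ∈ q.verts, p x := by
        obtain ⟨x, hx, hpx⟩ := h
        rcases List.mem_cons.mp hx with rfl | hx'
        · exact absurd hpx hp
        · exact ⟨x, hx', hpx⟩
      obtain ⟨c, P, S, h1, h2, h3⟩ := ih h'
      refine ⟨c, .cons e d P, S, h1, by rw [h2]; rfl, ?_⟩
      rw [srcs_cons]
      intro y hy h4
      rcases List.mem_cons.mp hy with rfl | hy'
      · exact hp h4
      · exact h3 y hy' h4

/-- Rotate a closed walk to start at any of its sources. -/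
lemma exists_rotate {v x : V} (C : Γ.Walk v v) (hx : x ∈ C.srcs) :
    ∃ R : Γ.Walk x x, R.edges.Perm C.edges ∧ R.srcs.Perm C.srcs := by
  obtain ⟨c, P, S, hc, hPS, -⟩ :=
    exists_split_first C (· = x) ⟨x, C.srcs_subset_verts hx, rfl⟩
  subst hc
  refine ⟨S.append P, ?_, ?_⟩
  · rw [hPS, edges_append, edges_append]; exact List.perm_append_comm
  · rw [hPS, srcs_append, srcs_append]; exact List.perm_append_comm

lemma mem_verts_of_mem_edges : ∀ {u w : V} (W : Γ.Walk u w) {e : E}, e ∈ W.edges →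
    (Γ.ends e).1 ∈ W.verts ∧ (Γ.ends e).2 ∈ W.verts
  | _, _, .nil v, e => by simp
  | _, _, .cons e' d q, e => by
    intro he
    rcases List.mem_cons.mp he with rfl | he'
    · have h1 : Γ.endpt e d ∈ (Walk.cons e d q).verts := start_mem_verts _
      have h2 : Γ.endpt e (!d) ∈ (Walk.cons e d q).verts := by
        show _ ∈ Γ.endpt e d :: q.verts
        exact List.mem_cons_of_mem _ q.start_mem_verts
      cases d
      · exact ⟨h2, h1⟩
      · exact ⟨h1, h2⟩
    · obtain ⟨ha, hb⟩ := mem_verts_of_mem_edges q he'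
      constructor <;> exact List.mem_cons_of_mem _ ‹_›

lemma exists_step_of_mem_edges : ∀ {u w : V} (W : Γ.Walk u w) {e : E}, e ∈ W.edges →
    ∃ d, (e, d) ∈ W.steps
  | _, _, .nil v, e => by simp
  | _, _, .cons e' d q, e => by
    intro he
    rcases List.mem_cons.mp he with rfl | he'
    · exact ⟨d, List.mem_cons_self⟩
    · obtain ⟨d', hd'⟩ := exists_step_of_mem_edges q he'
      exact ⟨d', List.mem_cons_of_mem _ hd'⟩

lemma src_mem_srcs_of_mem_steps : ∀ {u w : V} (W : Γ.Walk u w) {e : E} {d : Bool},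
    (e, d) ∈ W.steps → Γ.endpt e d ∈ W.srcs
  | _, _, .nil v, e, d => by simp [Walk.steps]
  | _, _, .cons e' d' q, e, d => by
    intro hs
    rw [srcs_cons]
    rcases List.mem_cons.mp hs with heq | hs'
    · rw [Prod.mk.injEq] at heq
      obtain ⟨rfl, rfl⟩ := heq
      exact List.mem_cons_self
    · exact List.mem_cons_of_mem _ (src_mem_srcs_of_mem_steps q hs')

lemma step_ne_of_nodup : ∀ {u w : V} (W : Γ.Walk u w), W.verts.Nodup →
    ∀ s ∈ W.steps, Γ.endpt s.1 s.2 ≠ Γ.endpt s.1 (!s.2)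
  | _, _, .nil v => by simp [Walk.steps]
  | _, _, .cons e d q => by
    intro hnd s hs
    have hv : (Walk.cons e d q).verts = Γ.endpt e d :: q.verts := rfl
    rw [hv, List.nodup_cons] at hnd
    rcases List.mem_cons.mp hs with heq | hs'
    · subst heq
      intro hcontra
      exact hnd.1 (by rw [show Γ.endpt e d = Γ.endpt e (!d) from hcontra]; exact q.start_mem_verts)
    · exact step_ne_of_nodup q hnd.2 s hs'

lemma mem_srcs_of_mem_verts_closed {v : V} (C : Γ.Walk v v) (h : C.edges ≠ []) {x : V}
    (hx : x ∈ C.verts) : x ∈ C.srcs := by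
  rw [C.verts_eq_srcs_concat] at hx
  rcases List.mem_append.mp hx with hx' | hx'
  · exact hx'
  · simp only [List.mem_singleton] at hx'
    subst hx'
    exact C.start_mem_srcs h

end Walk

end SGraph

end Aux2
section Aux3

namespace SGraph

variable {V E : Type*} {Γ : SGraph V E}

namespace Walk

/-- Remove repeated vertices from a walk. -/
lemma exists_dedup : ∀ (n : ℕ) {a b : V} (W : Γ.Walk a b), W.edges.length ≤ n →
    ∃ P : Γ.Walk a b, P.verts.Nodup ∧ ∀ x ∈ P.verts, x ∈ W.verts := by
  intro n
  induction n with
  | zero =>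
    intro a b W h
    cases W with
    | nil => exact ⟨.nil a, List.nodup_singleton a, fun x hx => hx⟩
    | cons e d q => simp [Walk.edges] at h
  | succ n ih =>
    intro a b W h
    cases W with
    | nil => exact ⟨.nil a, List.nodup_singleton a, fun x hx => hx⟩
    | cons e d q =>
      by_cases ha : Γ.endpt e d ∈ q.verts
      · obtain ⟨c, U, C, hc, hUC, -⟩ := exists_split_first q (· = Γ.endpt e d) ⟨_, ha, rfl⟩
        subst hc
        have hlen : C.edges.length ≤ n := by
          have h' : q.edges.length ≤ n := by
            have : (Walk.cons e d q).edges = e :: q.edges := rfl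
            rw [this] at h
            simpa using h
          rw [hUC, edges_append, List.length_append] at h'
          omega
        obtain ⟨P, hP1, hP2⟩ := ih C hlen
        refine ⟨P, hP1, fun x hx => ?_⟩
        have hx1 : x ∈ C.verts := hP2 x hx
        have hx2 : x ∈ q.verts := by
          rw [hUC, verts_append]; exact List.mem_append_right _ hx1
        exact List.mem_cons_of_mem _ hx2
      · obtain ⟨P, hP1, hP2⟩ := ih q (by
          have : (Walk.cons e d q).edges = e :: q.edges := rfl
          rw [this] at h
          simpa using h)
        refine ⟨.cons e d P, ?_, ?_⟩
        · show (Γ.endpt e d :: P.verts).Nodup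
          rw [List.nodup_cons]
          exact ⟨fun hx => ha (hP2 _ hx), hP1⟩
        · intro x hx
          rcases List.mem_cons.mp hx with rfl | hx'
          · exact start_mem_verts _
          · exact List.mem_cons_of_mem _ (hP2 x hx')

/-- Extract a clean path between two disjoint vertex sets from a walk. -/
lemma exists_path {S T : V → Prop} (hdisj : ∀ x, S x → T x → False)
    {a b : V} (W : Γ.Walk a b) (ha : S a) (hb : T b) :
    ∃ (a' b' : V) (P : Γ.Walk a' b'), S a' ∧ T b' ∧ P.verts.Nodup ∧ P.edges ≠ [] ∧
      (∀ x ∈ P.verts, S x → x = a') ∧ (∀ x ∈ P.verts, T x → x = b') := by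
  obtain ⟨t, A, B, ht, hAB, hAs⟩ := exists_split_first W T ⟨b, W.end_mem_verts, hb⟩
  obtain ⟨s, X, Y, hs, hXY, hXs⟩ := exists_split_first A.reverse S
    ⟨a, by rw [verts_reverse]; exact List.mem_reverse.mpr A.start_mem_verts, ha⟩
  have hXsub : ∀ x ∈ X.srcs, x ∈ A.verts := by
    intro x hx
    have h1 : x ∈ A.reverse.verts := by
      rw [hXY, verts_append]; exact List.mem_append_left _ hx
    rw [verts_reverse] at h1; exact List.mem_reverse.mp h1
  have hPv : ∀ x ∈ X.reverse.verts, x ∈ X.srcs ∨ x = s := by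
    intro x hx
    rw [verts_reverse, List.mem_reverse, X.verts_eq_srcs_concat] at hx
    rcases List.mem_append.mp hx with h | h
    · exact Or.inl h
    · simp only [List.mem_singleton] at h; exact Or.inr h
  obtain ⟨P, hP1, hP2⟩ := exists_dedup (X.reverse.edges.length) X.reverse le_rfl
  refine ⟨s, t, P, hs, ht, hP1, ?_, ?_, ?_⟩
  · cases P with
    | nil v => exact (hdisj _ hs ht).elim
    | cons e d q => simp [Walk.edges]
  · intro x hx hSx
    rcases hPv x (hP2 x hx) with h | h
    · exact absurd hSx (hXs x h)
    · exact h
  · intro x hx hTx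
    rcases hPv x (hP2 x hx) with h | h
    · have h2 := hXsub x h
      rw [A.verts_eq_srcs_concat] at h2
      rcases List.mem_append.mp h2 with h' | h'
      · exact absurd hTx (hAs x h')
      · simpa using h'
    · exact (hdisj _ (h ▸ hs) hTx).elim

end Walk

/-- Number of occurrences of a vertex in a list, as a sum. -/
noncomputable def ctv (x : V) (l : List V) : ℕ := (l.map (fun y => if y = x then (1:ℕ) else 0)).sum

lemma ctv_nil (x : V) : ctv x ([] : List V) = 0 := rfl

lemma ctv_cons (x a : V) (l : List V) :
    ctv x (a :: l) = (if a = x then 1 else 0) + ctv x l := by simp [ctv]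

lemma ctv_append (x : V) (l₁ l₂ : List V) : ctv x (l₁ ++ l₂) = ctv x l₁ + ctv x l₂ := by
  simp [ctv]

lemma ctv_eq_zero_of_not_mem {x : V} {l : List V} (hx : x ∉ l) : ctv x l = 0 := by
  induction l with
  | nil => rfl
  | cons a l ih =>
    rw [ctv_cons, if_neg (fun h => hx (by rw [← h]; exact List.mem_cons_self)),
      ih (fun h => hx (List.mem_cons_of_mem _ h))]

lemma ctv_eq_one_of_nodup {x : V} {l : List V} (h : l.Nodup) (hx : x ∈ l) : ctv x l = 1 := by
  induction l with
  | nil => simp at hx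
  | cons a l ih =>
    rw [List.nodup_cons] at h
    rw [ctv_cons]
    rcases List.mem_cons.mp hx with rfl | hx'
    · rw [if_pos rfl, ctv_eq_zero_of_not_mem h.1]
    · rw [if_neg (fun hax => h.1 (by rw [hax]; exact hx')), ih h.2 hx', Nat.zero_add]

lemma ctv_le_one_of_nodup {x : V} {l : List V} (h : l.Nodup) : ctv x l ≤ 1 := by
  by_cases hx : x ∈ l
  · rw [ctv_eq_one_of_nodup h hx]
  · rw [ctv_eq_zero_of_not_mem hx]; omega

/-- Incidence count of an edge at a vertex (loops count twice). -/
noncomputable def incCt (Γ : SGraph V E) (e : E) (v : V) : ℕ :=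
  (if (Γ.ends e).1 = v then 1 else 0) + (if (Γ.ends e).2 = v then 1 else 0)

lemma incCt_step (e : E) (d : Bool) (v : V) :
    incCt Γ e v
      = (if Γ.endpt e d = v then 1 else 0) + (if Γ.endpt e (!d) = v then 1 else 0) := by
  cases d
  · simp only [incCt, endpt, Bool.not_false, cond_false, cond_true]
    exact Nat.add_comm _ _
  · rfl

namespace Walk

lemma sum_incCt : ∀ {u w : V} (W : Γ.Walk u w) (v : V),
    (W.edges.map (fun e => incCt Γ e v)).sum = ctv v W.srcs + ctv v W.verts.tail
  | _, _, .nil x, v => by simp [Walk.verts, ctv]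
  | _, _, .cons e d q, v => by
    have ih := sum_incCt q v
    have h1 : (Walk.cons e d q).verts.tail = q.verts := rfl
    have h2 : ((Walk.cons e d q).edges.map (fun e => incCt Γ e v)).sum
        = incCt Γ e v + (q.edges.map (fun e => incCt Γ e v)).sum := by
      show ((e :: q.edges).map _).sum = _
      rw [List.map_cons, List.sum_cons]
    rw [h2, srcs_cons, h1, incCt_step e d v, ih, ctv_cons]
    conv_rhs => rw [q.verts_eq_cons, ctv_cons]
    ring

lemma sum_incCt_closed {v : V} (C : Γ.Walk v v) (x : V) :
    (C.edges.map (fun e => incCt Γ e x)).sum = 2 * ctv x C.srcs := by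
  rw [sum_incCt]
  have key : ctv x C.verts.tail = ctv x C.srcs := by
    have e1 : ctv x C.verts = (if v = x then 1 else 0) + ctv x C.verts.tail := by
      conv_lhs => rw [C.verts_eq_cons]
      rw [ctv_cons]
    have e2 : ctv x C.verts = ctv x C.srcs + (if v = x then 1 else 0) := by
      conv_lhs => rw [C.verts_eq_srcs_concat]
      rw [ctv_append, ctv_cons, ctv_nil, Nat.add_zero]
    have e3 := e1.symm.trans e2
    rw [Nat.add_comm (ctv x C.srcs)] at e3
    exact Nat.add_left_cancel e3
  rw [key]; ring

/-- A cycle whose edges are contained in another cycle's edges uses all of them. -/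
lemma cycle_edges_subset {v v' : V} (C : Γ.Walk v v) (D : Γ.Walk v' v')
    (hC : Γ.IsCycle C) (hD : Γ.IsCycle D) (hsub : ∀ e ∈ D.edges, e ∈ C.edges) :
    ∀ e ∈ C.edges, e ∈ D.edges := by
  obtain ⟨hCne, hCs, hCe⟩ := hC
  obtain ⟨hDne, hDs, hDe⟩ := hD
  have hkey : ∀ x ∈ D.srcs, ∀ e ∈ C.edges, e ∉ D.edges → incCt Γ e x = 0 := by
    intro x hx e heC heD
    have hDf : ∑ e ∈ D.edges.toFinset, incCt Γ e x = 2 := by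
      rw [List.sum_toFinset _ hDe, sum_incCt_closed, ctv_eq_one_of_nodup hDs hx]
    have hsubF : D.edges.toFinset ⊆ C.edges.toFinset := by
      intro e' he'
      rw [List.mem_toFinset] at *
      exact hsub e' he'
    have hCf : ∑ e ∈ C.edges.toFinset, incCt Γ e x = 2 * ctv x C.srcs := by
      rw [List.sum_toFinset _ hCe, sum_incCt_closed]
    have hle : (2:ℕ) ≤ 2 * ctv x C.srcs := by
      calc (2:ℕ) = ∑ e ∈ D.edges.toFinset, incCt Γ e x := hDf.symm
        _ ≤ ∑ e ∈ C.edges.toFinset, incCt Γ e x := Finset.sum_le_sum_of_subset hsubF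
        _ = 2 * ctv x C.srcs := hCf
    have hceq : 2 * ctv x C.srcs = 2 := by
      have := ctv_le_one_of_nodup (x := x) hCs
      omega
    have hzero : ∑ e ∈ C.edges.toFinset \ D.edges.toFinset, incCt Γ e x = 0 := by
      have hsd : (∑ e ∈ C.edges.toFinset \ D.edges.toFinset, incCt Γ e x)
          + ∑ e ∈ D.edges.toFinset, incCt Γ e x = ∑ e ∈ C.edges.toFinset, incCt Γ e x :=
        Finset.sum_sdiff hsubF
      omega
    have hmem : e ∈ C.edges.toFinset \ D.edges.toFinset := by
      rw [Finset.mem_sdiff, List.mem_toFinset, List.mem_toFinset]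
      exact ⟨heC, heD⟩
    exact (Finset.sum_eq_zero_iff.mp hzero) e hmem
  have hDv : ∀ e ∈ D.edges, (Γ.ends e).1 ∈ D.srcs ∧ (Γ.ends e).2 ∈ D.srcs := by
    intro e he
    obtain ⟨h1, h2⟩ := D.mem_verts_of_mem_edges he
    exact ⟨D.mem_srcs_of_mem_verts_closed hDne h1, D.mem_srcs_of_mem_verts_closed hDne h2⟩
  have hpos : ∀ (e : E) (d : Bool), incCt Γ e (Γ.endpt e d) ≠ 0 := by
    intro e d h0
    rcases Γ.endpt_or e d with h | h
    · rw [incCt, if_pos h.symm] at h0; omega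
    · rw [incCt, if_pos h.symm] at h0; omega
  have hedge : ∀ x ∈ D.srcs, ∀ e ∈ C.edges, (∃ d, Γ.endpt e d = x) → e ∈ D.edges := by
    rintro x hx e heC ⟨d, hd⟩
    by_contra heD
    exact hpos e d (by rw [hd]; exact hkey x hx e heC heD)
  have hprop : ∀ {p q : V} (Wk : Γ.Walk p q), (∀ e ∈ Wk.edges, e ∈ C.edges) → p ∈ D.srcs →
      ∀ y ∈ Wk.verts, y ∈ D.srcs := by
    intro p q Wk
    induction Wk with
    | nil z =>
      intro _ hz y hy
      simp only [Walk.verts, List.mem_singleton] at hy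
      subst hy; exact hz
    | cons e d q' ih =>
      intro hE hp y hy
      have heC : e ∈ C.edges := hE e (List.mem_cons_self)
      have heD : e ∈ D.edges := hedge _ hp e heC ⟨d, rfl⟩
      have hq' : Γ.endpt e (!d) ∈ D.srcs := by
        rcases Γ.endpt_or e (!d) with h | h <;> rw [h]
        · exact (hDv e heD).1
        · exact (hDv e heD).2
      rcases List.mem_cons.mp hy with rfl | hy'
      · exact hp
      · exact ih (fun e' he' => hE e' (List.mem_cons_of_mem _ he')) hq' y hy'
  obtain ⟨e₀, he₀⟩ := List.exists_mem_of_ne_nil _ hDne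
  have he₀C : e₀ ∈ C.edges := hsub e₀ he₀
  have hx₀C : (Γ.ends e₀).1 ∈ C.srcs :=
    C.mem_srcs_of_mem_verts_closed hCne (C.mem_verts_of_mem_edges he₀C).1
  have hx₀D : (Γ.ends e₀).1 ∈ D.srcs := (hDv e₀ he₀).1
  obtain ⟨R, hRe, hRs⟩ := C.exists_rotate hx₀C
  have hRD : ∀ y ∈ R.verts, y ∈ D.srcs :=
    hprop R (fun e he => hRe.subset he) hx₀D
  intro e heC
  have heR : e ∈ R.edges := hRe.mem_iff.mpr heC
  have hsrcD : (Γ.ends e).1 ∈ D.srcs := hRD _ (R.mem_verts_of_mem_edges heR).1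
  by_contra heD
  have h0 := hkey _ hsrcD e heC heD
  rw [incCt, if_pos rfl] at h0
  omega

end Walk

end SGraph

end Aux3
section Aux4

namespace SGraph

variable {V E : Type*} {Γ : SGraph V E}

namespace Walk

lemma ends_eq_of_edges_eq_nil {u w : V} (W : Γ.Walk u w) (h : W.edges = []) : u = w := by
  cases W with
  | nil => rfl
  | cons e d q => simp [Walk.edges] at h

lemma srcs_eq_nil_of_edges_eq_nil {u w : V} (W : Γ.Walk u w) (h : W.edges = []) :
    W.srcs = [] := by
  cases W with
  | nil => rfl
  | cons e d q => simp [Walk.edges] at h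

lemma sgn_eq_one_of_edges_eq_nil {u w : V} (W : Γ.Walk u w) (h : W.edges = []) :
    W.sgn = 1 := by
  rw [sgn_eq_prod, h]; rfl

lemma edgeSum_eq_zero_of_edges_eq_nil {H : Type*} [AddCommGroup H] (g : E → H)
    {u w : V} (W : Γ.Walk u w) (h : W.edges = []) : W.edgeSum g = 0 := by
  unfold edgeSum
  rw [h]; rfl

/-- Extract from a walk with endpoints in `S` a nonempty segment avoiding `F`-edges,
whose endpoints lie in `S` and whose interior sources avoid `S`. -/
lemma exists_segment {S : V → Prop} {F : E → Prop}
    (hFS : ∀ e, F e → S (Γ.ends e).1 ∧ S (Γ.ends e).2) :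
    ∀ {y z : V} (W : Γ.Walk y z), S y → S z → (∃ e ∈ W.edges, ¬ F e) →
    ∃ (a b : V) (pre : Γ.Walk y a) (Q : Γ.Walk a b) (post : Γ.Walk b z),
      W = pre.append (Q.append post) ∧ S a ∧ S b ∧ Q.edges ≠ [] ∧
      (∀ e ∈ Q.edges, ¬ F e) ∧ (∀ x ∈ Q.srcs.tail, ¬ S x)
  | _, _, .nil v => by
    intro _ _ hex
    simp [Walk.edges] at hex
  | _, z, .cons e d q => by
    intro hy hz hex
    by_cases hF : F e
    · have ht : S (Γ.endpt e (!d)) := by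
        rcases Γ.endpt_or e (!d) with h | h <;> rw [h]
        · exact (hFS e hF).1
        · exact (hFS e hF).2
      have hex' : ∃ e' ∈ q.edges, ¬ F e' := by
        obtain ⟨e', he', hFe'⟩ := hex
        rcases List.mem_cons.mp he' with rfl | he''
        · exact absurd hF hFe'
        · exact ⟨e', he'', hFe'⟩
      obtain ⟨a, b, pre, Q, post, h1, h2, h3, h4, h5, h6⟩ := exists_segment hFS q ht hz hex'
      exact ⟨a, b, .cons e d pre, Q, post, by rw [h1]; rfl, h2, h3, h4, h5, h6⟩
    · obtain ⟨c, Q', post, hc, hsplit, hQ's⟩ :=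
        exists_split_first q S ⟨z, q.end_mem_verts, hz⟩
      refine ⟨Γ.endpt e d, c, .nil _, .cons e d Q', post, ?_, hy, hc, ?_, ?_, ?_⟩
      · show Walk.cons e d q = (Walk.cons e d Q').append post
        rw [hsplit]; rfl
      · show e :: Q'.edges ≠ []
        simp
      · intro e' he' hFe'
        rcases List.mem_cons.mp he' with rfl | he''
        · exact hF hFe'
        · obtain ⟨d', hd'⟩ := Q'.exists_step_of_mem_edges he''
          have hsrc := Q'.src_mem_srcs_of_mem_steps hd'
          have hS : S (Γ.endpt e' d') := by
            rcases Γ.endpt_or e' d' with h | h <;> rw [h]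
            · exact (hFS e' hFe').1
            · exact (hFS e' hFe').2
          exact hQ's _ hsrc hS
      · intro x hx
        rw [srcs_cons, List.tail_cons] at hx
        exact fun hS => hQ's x hx hS

end Walk

lemma isCircuitWalk_of_basic {v : V} {W : Γ.Walk v v} (h : Γ.IsBasicCircuitWalk W) :
    Γ.IsCircuitWalk W :=
  ⟨v, W, .nil v, rfl, by rw [Walk.append_nil]; exact h⟩

section TwoTorsion

variable {H : Type*} [AddCommGroup H]

lemma eq_of_add_eq_zero2 (h2 : ∀ x : H, x + x = 0) {x y : H} (h : x + y = 0) : x = y := by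
  have h3 : -y = y := neg_eq_of_add_eq_zero_left (h2 y)
  rw [← h3]
  exact eq_neg_of_add_eq_zero_left h

variable {g : E → H}

lemma sum_balanced
    (hcirc : ∀ (v : V) (W : Γ.Walk v v), Γ.IsCircuitWalk W → W.edgeSum g = 0)
    {v : V} {W : Γ.Walk v v} (h : Γ.IsBalancedCycle W) :
    W.edgeSum g = 0 :=
  hcirc v W (isCircuitWalk_of_basic (Or.inl h))

lemma sum_tight
    (hcirc : ∀ (v : V) (W : Γ.Walk v v), Γ.IsCircuitWalk W → W.edgeSum g = 0)
    {v : V} {C₁ C₂ : Γ.Walk v v} (h : Γ.IsTightHandcuff C₁ C₂) :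
    C₁.edgeSum g + C₂.edgeSum g = 0 := by
  have h0 := hcirc v (C₁.append C₂)
    (isCircuitWalk_of_basic (Or.inr (Or.inl ⟨C₁, C₂, h, rfl⟩)))
  rwa [Walk.edgeSum_append] at h0

lemma sum_loose
    (hcirc : ∀ (v : V) (W : Γ.Walk v v), Γ.IsCircuitWalk W → W.edgeSum g = 0)
    (h2 : ∀ x : H, x + x = 0) {u w : V} {C₁ : Γ.Walk u u} {P : Γ.Walk u w}
    {C₂ : Γ.Walk w w} (h : Γ.IsLooseHandcuff C₁ P C₂) :
    C₁.edgeSum g + C₂.edgeSum g = 0 := by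
  have h0 := hcirc u (C₁.append (P.append (C₂.append P.reverse)))
    (isCircuitWalk_of_basic (Or.inr (Or.inr
      ⟨w, C₁, P, C₂, P.reverse, h, P.reverse_isReverseOf, rfl⟩)))
  rw [Walk.edgeSum_append, Walk.edgeSum_append, Walk.edgeSum_append,
    Walk.edgeSum_reverse] at h0
  have h1 : C₁.edgeSum g + C₂.edgeSum g + (P.edgeSum g + P.edgeSum g) = 0 := by
    rw [← h0]; abel
  rwa [h2, add_zero] at h1

end TwoTorsion

end SGraph

end Aux4
section Aux5

namespace SGraph

variable {V E : Type*} {Γ : SGraph V E}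

lemma unbal_of_perms {v x : V} {C : Γ.Walk v v} {R : Γ.Walk x x}
    (h : Γ.IsUnbalancedCycle C) (he : R.edges.Perm C.edges) (hs : R.srcs.Perm C.srcs) :
    Γ.IsUnbalancedCycle R := by
  refine ⟨⟨?_, hs.nodup_iff.mpr h.1.2.1, he.nodup_iff.mpr h.1.2.2⟩, ?_⟩
  · intro h0
    have hp := he.symm
    rw [h0] at hp
    exact h.1.1 hp.eq_nil
  · rw [Walk.sgn_congr_perm he]; exact h.2

lemma edges_perm_of_subsets {v v' : V} {C : Γ.Walk v v} {C' : Γ.Walk v' v'}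
    (hnd : C.edges.Nodup) (hnd' : C'.edges.Nodup)
    (h1 : ∀ e ∈ C.edges, e ∈ C'.edges) (h2 : ∀ e ∈ C'.edges, e ∈ C.edges) :
    C.edges.Perm C'.edges :=
  List.perm_of_nodup_nodup_toFinset_eq hnd hnd' (by
    ext e
    simp only [List.mem_toFinset]
    exact ⟨fun h => h1 e h, fun h => h2 e h⟩)

lemma main_shared {H : Type*} [AddCommGroup H] (h2 : ∀ x : H, x + x = 0) (g : E → H)
    (hcirc : ∀ (v : V) (W : Γ.Walk v v), Γ.IsCircuitWalk W → W.edgeSum g = 0) :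
    ∀ (n : ℕ) {v v' : V} (C : Γ.Walk v v) (C' : Γ.Walk v' v'),
      Γ.IsUnbalancedCycle C → Γ.IsUnbalancedCycle C' →
      (∃ y, y ∈ C.srcs ∧ y ∈ C'.srcs) →
      (C.edges.toFinset \ C'.edges.toFinset).card ≤ n →
      C.edgeSum g = C'.edgeSum g := by
  intro n
  induction n using Nat.strong_induction_on with
  | _ n ih =>
  intro v v' C C' hC hC' hshare hcard
  by_cases hsub : ∀ e ∈ C.edges, e ∈ C'.edges
  · have hsub2 := Walk.cycle_edges_subset C' C hC'.1 hC.1 hsub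
    exact Walk.edgeSum_congr_perm g (edges_perm_of_subsets hC.1.2.2 hC'.1.2.2 hsub hsub2)
  by_cases hsub' : ∀ e ∈ C'.edges, e ∈ C.edges
  · have hsub2 := Walk.cycle_edges_subset C C' hC.1 hC'.1 hsub'
    exact Walk.edgeSum_congr_perm g (edges_perm_of_subsets hC.1.2.2 hC'.1.2.2 hsub2 hsub')
  push_neg at hsub hsub'
  obtain ⟨eD, heD, heDC⟩ := hsub'
  obtain ⟨y, hyC, hyC'⟩ := hshare
  -- rotate C' at the shared vertex y
  obtain ⟨R', hR'e, hR's⟩ := C'.exists_rotate hyC'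
  have hFS : ∀ e, (e ∈ C.edges) → (Γ.ends e).1 ∈ C.srcs ∧ (Γ.ends e).2 ∈ C.srcs := by
    intro e he
    obtain ⟨ha', hb'⟩ := C.mem_verts_of_mem_edges he
    exact ⟨C.mem_srcs_of_mem_verts_closed hC.1.1 ha',
      C.mem_srcs_of_mem_verts_closed hC.1.1 hb'⟩
  obtain ⟨a, b, pre, Q, post, hsplit, haS, hbS, hQne, hQF, hQtail⟩ :=
    Walk.exists_segment (S := (· ∈ C.srcs)) (F := (· ∈ C.edges)) hFS R' hyC hyC
      ⟨eD, hR'e.mem_iff.mpr heD, heDC⟩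
  have hR'srcs : R'.srcs = pre.srcs ++ (Q.srcs ++ post.srcs) := by
    rw [hsplit, Walk.srcs_append, Walk.srcs_append]
  have hR'edges : R'.edges = pre.edges ++ (Q.edges ++ post.edges) := by
    rw [hsplit, Walk.edges_append, Walk.edges_append]
  have hR'snd : R'.srcs.Nodup := hR's.nodup_iff.mpr hC'.1.2.1
  have hR'end : R'.edges.Nodup := hR'e.nodup_iff.mpr hC'.1.2.2
  rw [hR'srcs] at hR'snd
  rw [hR'edges] at hR'end
  obtain ⟨hpre_s_nd, hmid_s_nd, hpre_s_dj⟩ := List.nodup_append.mp hR'snd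
  obtain ⟨hQs_nd, hpost_s_nd, hQpost_s_dj⟩ := List.nodup_append.mp hmid_s_nd
  obtain ⟨hpre_e_nd, hmid_e_nd, hpre_e_dj⟩ := List.nodup_append.mp hR'end
  obtain ⟨hQe_nd, hpost_e_nd, hQpost_e_dj⟩ := List.nodup_append.mp hmid_e_nd
  have hQsrcs : Q.srcs = a :: Q.srcs.tail := Q.srcs_eq_cons hQne
  have hQsC' : ∀ x ∈ Q.srcs, x ∈ C'.srcs := fun x hx => hR's.subset (by
    rw [hR'srcs]; exact List.mem_append_right _ (List.mem_append_left _ hx))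
  have hQeC' : ∀ e ∈ Q.edges, e ∈ C'.edges := fun e he => hR'e.subset (by
    rw [hR'edges]; exact List.mem_append_right _ (List.mem_append_left _ he))
  have haQ : a ∈ Q.srcs := Q.start_mem_srcs hQne
  by_cases hab : a = b
  · -- the segment is the whole of C' : tight handcuff case
    subst hab
    have hpost_nil : post.edges = [] := by
      by_contra h0
      exact hQpost_s_dj _ haQ _ (post.start_mem_srcs h0) rfl
    have hay : a = y := post.ends_eq_of_edges_eq_nil hpost_nil
    have hpre_nil : pre.edges = [] := by
      by_contra h0
      have h3 : y ∈ pre.srcs := pre.start_mem_srcs h0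
      refine hpre_s_dj y h3 y (List.mem_append_left _ ?_) rfl
      rw [← hay]; exact haQ
    have hQsgn : Q.sgn = -1 := by
      have e2' : R'.sgn = pre.sgn * (Q.sgn * post.sgn) := by
        rw [hsplit, Walk.sgn_append, Walk.sgn_append]
      rw [pre.sgn_eq_one_of_edges_eq_nil hpre_nil,
        post.sgn_eq_one_of_edges_eq_nil hpost_nil, one_mul, mul_one] at e2'
      rw [← e2', Walk.sgn_congr_perm hR'e]
      exact hC'.2
    have hQcyc : Γ.IsUnbalancedCycle Q := ⟨⟨hQne, hQs_nd, hQe_nd⟩, hQsgn⟩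
    obtain ⟨Rc, hRce, hRcs⟩ := C.exists_rotate haS
    have hRcU : Γ.IsUnbalancedCycle Rc := unbal_of_perms hC hRce hRcs
    have hTH : Γ.IsTightHandcuff Rc Q := by
      refine ⟨hRcU, hQcyc, ?_, ?_⟩
      · intro x hxRc hxQ
        rw [hQsrcs] at hxQ
        rcases List.mem_cons.mp hxQ with rfl | hx
        · rfl
        · exact absurd (hRcs.subset hxRc) (hQtail x hx)
      · intro e heRc heQ
        exact hQF e heQ (hRce.subset heRc)
    have hsum := sum_tight hcirc hTH
    have e1 : C.edgeSum g = Rc.edgeSum g := (Walk.edgeSum_congr_perm g hRce).symm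
    have e2 : Q.edgeSum g = R'.edgeSum g := by
      have e2' : R'.edgeSum g = pre.edgeSum g + (Q.edgeSum g + post.edgeSum g) := by
        rw [hsplit, Walk.edgeSum_append, Walk.edgeSum_append]
      rw [pre.edgeSum_eq_zero_of_edges_eq_nil g hpre_nil,
        post.edgeSum_eq_zero_of_edges_eq_nil g hpost_nil, zero_add, add_zero] at e2'
      exact e2'.symm
    have e3 : R'.edgeSum g = C'.edgeSum g := Walk.edgeSum_congr_perm g hR'e
    rw [e1, ← e3, ← e2]
    exact eq_of_add_eq_zero2 h2 hsum
  · -- a ≠ b : theta case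
    obtain ⟨Rc, hRce, hRcs⟩ := C.exists_rotate haS
    have hbRc : b ∈ Rc.srcs := hRcs.mem_iff.mpr hbS
    obtain ⟨c, A, B, hcb, hABsplit, hbA⟩ :=
      Walk.exists_split_first Rc (· = b) ⟨b, Rc.srcs_subset_verts hbRc, rfl⟩
    subst hcb
    have hAne : A.edges ≠ [] := fun h0 => hab (A.ends_eq_of_edges_eq_nil h0)
    have hBne : B.edges ≠ [] := fun h0 => hab (B.ends_eq_of_edges_eq_nil h0).symm
    have hsplit_s : Rc.srcs = A.srcs ++ B.srcs := by rw [hABsplit, Walk.srcs_append]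
    have hsplit_e : Rc.edges = A.edges ++ B.edges := by rw [hABsplit, Walk.edges_append]
    have hRcs_nd : Rc.srcs.Nodup := hRcs.nodup_iff.mpr hC.1.2.1
    have hRce_nd : Rc.edges.Nodup := hRce.nodup_iff.mpr hC.1.2.2
    rw [hsplit_s] at hRcs_nd
    rw [hsplit_e] at hRce_nd
    obtain ⟨hAs_nd, hBs_nd, hABs_dj⟩ := List.nodup_append.mp hRcs_nd
    obtain ⟨hAe_nd, hBe_nd, hABe_dj⟩ := List.nodup_append.mp hRce_nd
    have hAsC : ∀ x ∈ A.srcs, x ∈ C.srcs := fun x hx => hRcs.subset (by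
      rw [hsplit_s]; exact List.mem_append_left _ hx)
    have hBsC : ∀ x ∈ B.srcs, x ∈ C.srcs := fun x hx => hRcs.subset (by
      rw [hsplit_s]; exact List.mem_append_right _ hx)
    have hAeC : ∀ e ∈ A.edges, e ∈ C.edges := fun e he => hRce.subset (by
      rw [hsplit_e]; exact List.mem_append_left _ he)
    have hBeC : ∀ e ∈ B.edges, e ∈ C.edges := fun e he => hRce.subset (by
      rw [hsplit_e]; exact List.mem_append_right _ he)
    have hQv : Q.verts = (a :: Q.srcs.tail) ++ [c] := by
      rw [← hQsrcs]; exact Q.verts_eq_srcs_concat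
    have hQrevs : Q.reverse.srcs = c :: Q.srcs.tail.reverse := by
      show Q.reverse.verts.dropLast = _
      rw [Walk.verts_reverse, hQv]
      simp only [List.reverse_append, List.reverse_cons, List.reverse_nil, List.nil_append,
        List.singleton_append]
      rw [show c :: (Q.srcs.tail.reverse ++ [a]) = (c :: Q.srcs.tail.reverse) ++ [a] from rfl,
        List.dropLast_concat]
    have htail_nd : Q.srcs.tail.Nodup := by
      rw [hQsrcs] at hQs_nd; exact (List.nodup_cons.mp hQs_nd).2
    have hD1e : (A.append Q.reverse).edges = A.edges ++ Q.edges.reverse := by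
      rw [Walk.edges_append, Walk.edges_reverse]
    have hD1s : (A.append Q.reverse).srcs = A.srcs ++ (c :: Q.srcs.tail.reverse) := by
      rw [Walk.srcs_append, hQrevs]
    have hD2e : (Q.append B).edges = Q.edges ++ B.edges := Walk.edges_append _ _
    have hD2s : (Q.append B).srcs = Q.srcs ++ B.srcs := Walk.srcs_append _ _
    have hD1cyc : Γ.IsCycle (A.append Q.reverse) := by
      refine ⟨?_, ?_, ?_⟩
      · rw [hD1e]; intro h0; exact hAne (List.append_eq_nil_iff.mp h0).1
      · rw [hD1s, List.nodup_append]
        refine ⟨hAs_nd, ?_, ?_⟩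
        · rw [List.nodup_cons]
          exact ⟨fun hb => hQtail c (List.mem_reverse.mp hb) hbS,
            List.nodup_reverse.mpr htail_nd⟩
        · intro x hxA y hx2 hxy
          subst y
          rcases List.mem_cons.mp hx2 with rfl | hx3
          · exact hbA x hxA rfl
          · exact hQtail x (List.mem_reverse.mp hx3) (hAsC x hxA)
      · rw [hD1e, List.nodup_append]
        exact ⟨hAe_nd, List.nodup_reverse.mpr hQe_nd,
          fun e heA _ heQ hee => by subst hee; exact hQF e (List.mem_reverse.mp heQ) (hAeC e heA)⟩
    have hD2cyc : Γ.IsCycle (Q.append B) := by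
      refine ⟨?_, ?_, ?_⟩
      · rw [hD2e]; intro h0; exact hQne (List.append_eq_nil_iff.mp h0).1
      · rw [hD2s, List.nodup_append]
        refine ⟨hQs_nd, hBs_nd, ?_⟩
        intro x hxQ y hxB hxy
        subst y
        rw [hQsrcs] at hxQ
        rcases List.mem_cons.mp hxQ with rfl | hx3
        · exact hABs_dj _ (A.start_mem_srcs hAne) _ hxB rfl
        · exact hQtail x hx3 (hBsC x hxB)
      · rw [hD2e, List.nodup_append]
        exact ⟨hQe_nd, hBe_nd, fun e heQ _ heB hee => by subst hee; exact hQF e heQ (hBeC e heB)⟩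
    have hs1 : (A.append Q.reverse).sgn = A.sgn * Q.sgn := by
      rw [Walk.sgn_append, Walk.sgn_reverse]
    have hs2 : (Q.append B).sgn = Q.sgn * B.sgn := Walk.sgn_append _ _
    have hsC : A.sgn * B.sgn = -1 := by
      have h3 : Rc.sgn = A.sgn * B.sgn := by rw [hABsplit, Walk.sgn_append]
      rw [← h3, Walk.sgn_congr_perm hRce]
      exact hC.2
    have hprod : (A.append Q.reverse).sgn * (Q.append B).sgn = -1 := by
      rw [hs1, hs2, mul_comm Q.sgn B.sgn, mul_mul_mul_comm, hsC, Int.units_mul_self,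
        mul_one]
    have hsum1 : (A.append Q.reverse).edgeSum g = A.edgeSum g + Q.edgeSum g := by
      rw [Walk.edgeSum_append, Walk.edgeSum_reverse]
    have hsum2 : (Q.append B).edgeSum g = Q.edgeSum g + B.edgeSum g :=
      Walk.edgeSum_append g Q B
    have hsumC : C.edgeSum g = A.edgeSum g + B.edgeSum g := by
      rw [← Walk.edgeSum_congr_perm g hRce, hABsplit, Walk.edgeSum_append]
    rcases Int.units_eq_one_or (A.append Q.reverse).sgn with h1 | h1
    · -- A + Q̄ balanced, Q + B unbalanced
      have hD2sgn : (Q.append B).sgn = -1 := by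
        rw [h1, one_mul] at hprod; exact hprod
      have hD2unb : Γ.IsUnbalancedCycle (Q.append B) := ⟨hD2cyc, hD2sgn⟩
      have hbal : (A.append Q.reverse).edgeSum g = 0 := sum_balanced hcirc ⟨hD1cyc, h1⟩
      rw [hsum1] at hbal
      have hAQ : A.edgeSum g = Q.edgeSum g := eq_of_add_eq_zero2 h2 hbal
      have hsumD2 : (Q.append B).edgeSum g = C.edgeSum g := by
        rw [hsum2, ← hAQ, ← hsumC]
      have hexA : ∃ e₁ ∈ A.edges, e₁ ∉ C'.edges := by
        by_contra h0
        push_neg at h0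
        have hsubD1 : ∀ e ∈ (A.append Q.reverse).edges, e ∈ C'.edges := by
          intro e he
          rw [hD1e] at he
          rcases List.mem_append.mp he with h | h
          · exact h0 e h
          · exact hQeC' e (List.mem_reverse.mp h)
        have hss := Walk.cycle_edges_subset C' (A.append Q.reverse) hC'.1 hD1cyc hsubD1
        have hsgn := Walk.sgn_congr_perm
          (edges_perm_of_subsets hD1cyc.2.2 hC'.1.2.2 hsubD1 hss)
        rw [h1, hC'.2] at hsgn
        have h4 := congrArg (Units.val) hsgn
        norm_num at h4
      obtain ⟨e₁, he₁A, he₁C'⟩ := hexA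
      have hMsub : (Q.append B).edges.toFinset \ C'.edges.toFinset
          ⊆ C.edges.toFinset \ C'.edges.toFinset := by
        intro e he
        rw [Finset.mem_sdiff, List.mem_toFinset, List.mem_toFinset] at he ⊢
        obtain ⟨he1, he2⟩ := he
        rw [hD2e] at he1
        rcases List.mem_append.mp he1 with h | h
        · exact absurd (hQeC' e h) he2
        · exact ⟨hBeC e h, he2⟩
      have hMne : e₁ ∈ C.edges.toFinset \ C'.edges.toFinset := by
        rw [Finset.mem_sdiff, List.mem_toFinset, List.mem_toFinset]
        exact ⟨hAeC e₁ he₁A, he₁C'⟩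
      have hMnotin : e₁ ∉ (Q.append B).edges.toFinset \ C'.edges.toFinset := by
        rw [Finset.mem_sdiff, List.mem_toFinset]
        rintro ⟨h1', h2'⟩
        rw [hD2e] at h1'
        rcases List.mem_append.mp h1' with h | h
        · exact hQF e₁ h (hAeC e₁ he₁A)
        · exact hABe_dj _ he₁A _ h rfl
      have hlt : ((Q.append B).edges.toFinset \ C'.edges.toFinset).card
          < (C.edges.toFinset \ C'.edges.toFinset).card :=
        Finset.card_lt_card ((Finset.ssubset_iff_of_subset hMsub).mpr ⟨e₁, hMne, hMnotin⟩)
      have hshare2 : ∃ y', y' ∈ (Q.append B).srcs ∧ y' ∈ C'.srcs := by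
        refine ⟨a, ?_, hQsC' a haQ⟩
        rw [hD2s]; exact List.mem_append_left _ haQ
      have hihres := ih _ (lt_of_lt_of_le hlt hcard) (Q.append B) C' hD2unb hC' hshare2
        le_rfl
      rw [← hsumD2]
      exact hihres
    · -- A + Q̄ unbalanced, Q + B balanced
      have hD2sgn : (Q.append B).sgn = 1 := by
        rw [h1] at hprod
        have h3 : (-1 : ℤˣ) * (Q.append B).sgn = (-1) * 1 := by rw [mul_one]; exact hprod
        exact mul_left_cancel h3
      have hbal : (Q.append B).edgeSum g = 0 := sum_balanced hcirc ⟨hD2cyc, hD2sgn⟩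
      rw [hsum2] at hbal
      have hQB : Q.edgeSum g = B.edgeSum g := eq_of_add_eq_zero2 h2 hbal
      have hD1unb : Γ.IsUnbalancedCycle (A.append Q.reverse) := ⟨hD1cyc, h1⟩
      have hsumD1 : (A.append Q.reverse).edgeSum g = C.edgeSum g := by
        rw [hsum1, hQB, ← hsumC]
      have hexB : ∃ e₁ ∈ B.edges, e₁ ∉ C'.edges := by
        by_contra h0
        push_neg at h0
        have hsubD2 : ∀ e ∈ (Q.append B).edges, e ∈ C'.edges := by
          intro e he
          rw [hD2e] at he
          rcases List.mem_append.mp he with h | h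
          · exact hQeC' e h
          · exact h0 e h
        have hss := Walk.cycle_edges_subset C' (Q.append B) hC'.1 hD2cyc hsubD2
        have hsgn := Walk.sgn_congr_perm
          (edges_perm_of_subsets hD2cyc.2.2 hC'.1.2.2 hsubD2 hss)
        rw [hD2sgn, hC'.2] at hsgn
        have h4 := congrArg (Units.val) hsgn
        norm_num at h4
      obtain ⟨e₁, he₁B, he₁C'⟩ := hexB
      have hMsub : (A.append Q.reverse).edges.toFinset \ C'.edges.toFinset
          ⊆ C.edges.toFinset \ C'.edges.toFinset := by
        intro e he
        rw [Finset.mem_sdiff, List.mem_toFinset, List.mem_toFinset] at he ⊢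
        obtain ⟨he1, he2⟩ := he
        rw [hD1e] at he1
        rcases List.mem_append.mp he1 with h | h
        · exact ⟨hAeC e h, he2⟩
        · exact absurd (hQeC' e (List.mem_reverse.mp h)) he2
      have hMne : e₁ ∈ C.edges.toFinset \ C'.edges.toFinset := by
        rw [Finset.mem_sdiff, List.mem_toFinset, List.mem_toFinset]
        exact ⟨hBeC e₁ he₁B, he₁C'⟩
      have hMnotin : e₁ ∉ (A.append Q.reverse).edges.toFinset \ C'.edges.toFinset := by
        rw [Finset.mem_sdiff, List.mem_toFinset]
        rintro ⟨h1', h2'⟩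
        rw [hD1e] at h1'
        rcases List.mem_append.mp h1' with h | h
        · exact hABe_dj _ h _ he₁B rfl
        · exact hQF e₁ (List.mem_reverse.mp h) (hBeC e₁ he₁B)
      have hlt : ((A.append Q.reverse).edges.toFinset \ C'.edges.toFinset).card
          < (C.edges.toFinset \ C'.edges.toFinset).card :=
        Finset.card_lt_card ((Finset.ssubset_iff_of_subset hMsub).mpr ⟨e₁, hMne, hMnotin⟩)
      have hshare2 : ∃ y', y' ∈ (A.append Q.reverse).srcs ∧ y' ∈ C'.srcs := by
        refine ⟨a, ?_, hQsC' a haQ⟩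
        rw [hD1s]; exact List.mem_append_left _ (A.start_mem_srcs hAne)
      have hihres := ih _ (lt_of_lt_of_le hlt hcard) (A.append Q.reverse) C' hD1unb hC'
        hshare2 le_rfl
      rw [← hsumD1]
      exact hihres

end SGraph

end Aux5
section Statement

open SGraph

/-- Proposition 7.6: for a connected unbalanced signed graph, the edge sums of a
`G`-tension around unbalanced cycles all lie in a common coset of `2G`. -/
theorem tension_unbalanced_cycles_common_coset (V E : Type) [Finite V] [Finite E]
    (Γ : SGraph V E) (hconn : Γ.Connected) (hunbal : ¬ Γ.Balanced)
    (ω : E → Bool → ℤˣ) (hω : Γ.IsCompatible ω)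
    (G : Type) [AddCommGroup G] [Finite G] (f : E → G) (hf : Γ.IsTension ω f) :
    ∃ u : G, ∀ (v : V) (W : Γ.Walk v v),
      Γ.IsUnbalancedCycle W → W.edgeSum f - u ∈ twoG G := by
  classical
  simp only [SGraph.Balanced] at hunbal
  push_neg at hunbal
  obtain ⟨v₀, C₀, hcyc₀, hsgn₀⟩ := hunbal
  have hsgn₀' : C₀.sgn = -1 := by
    rcases Int.units_eq_one_or C₀.sgn with h | h
    · exact absurd h hsgn₀
    · exact h
  have hC₀ : Γ.IsUnbalancedCycle C₀ := ⟨hcyc₀, hsgn₀'⟩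
  set q : G →+ G ⧸ twoG G := QuotientAddGroup.mk' (twoG G) with hqdef
  have h2 : ∀ x : G ⧸ twoG G, x + x = 0 := by
    intro x
    refine QuotientAddGroup.induction_on x ?_
    intro a
    have ha : ((a : G ⧸ twoG G)) + a = q (a + a) := (map_add q a a).symm
    rw [ha]
    exact (QuotientAddGroup.eq_zero_iff _).mpr ⟨a, rfl⟩
  set g : E → G ⧸ twoG G := fun e => q (f e) with hgdef
  have hunits : ∀ (z : ℤˣ) (x : G ⧸ twoG G), (z : ℤ) • x = x := by
    intro z x
    rcases Int.units_eq_one_or z with h | h <;> rw [h]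
    · simp
    · have hval : ((-1 : ℤˣ) : ℤ) = -1 := rfl
      rw [hval, neg_one_zsmul]
      exact neg_eq_of_add_eq_zero_left (h2 x)
  have hmapT : ∀ {u w : V} (W : Γ.Walk u w), q (W.tensionSum ω f) = W.edgeSum g := by
    intro u w W
    induction W with
    | nil x => simp [Walk.tensionSum, Walk.edgeSum, Walk.edges]
    | cons e d p ihp =>
      have ht : (Walk.cons e d p).tensionSum ω f
          = ((ω e d : ℤ) • f e) + ((Γ.sign e : ℤ) • p.tensionSum ω f) := rfl
      have he : (Walk.cons e d p).edgeSum g = g e + p.edgeSum g := by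
        show ((e :: p.edges).map g).sum = _
        rw [List.map_cons, List.sum_cons]
        rfl
      rw [ht, he, map_add, map_zsmul, map_zsmul, hunits, hunits, ihp]
  have hcirc : ∀ (v : V) (W : Γ.Walk v v), Γ.IsCircuitWalk W → W.edgeSum g = 0 := by
    intro v W hW
    rw [← hmapT W, hf v W hW, map_zero]
  have hqsum : ∀ {u w : V} (W' : Γ.Walk u w), q (W'.edgeSum f) = W'.edgeSum g := by
    intro u w W'
    show q ((W'.edges.map f).sum) = (W'.edges.map g).sum
    rw [map_list_sum, List.map_map]
    rfl
  refine ⟨C₀.edgeSum f, ?_⟩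
  intro v W hW
  have hgoal : q (W.edgeSum f) = q (C₀.edgeSum f) → W.edgeSum f - C₀.edgeSum f ∈ twoG G :=
    fun h => (QuotientAddGroup.eq_iff_sub_mem).mp h
  apply hgoal
  rw [hqsum W, hqsum C₀]
  by_cases hsh : ∃ y, y ∈ W.srcs ∧ y ∈ C₀.srcs
  · exact main_shared h2 g hcirc _ W C₀ hW hC₀ hsh le_rfl
  · push_neg at hsh
    have hwalk : ∀ a b : V, Nonempty (Γ.Walk a b) := by
      intro a b
      have hsub : Subsingleton Γ.Components := (Nat.card_eq_one_iff_unique.mp hconn).1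
      have heqv : Relation.EqvGen Γ.Adj a b :=
        Quot.eq.mp (@Subsingleton.elim _ hsub (Quot.mk Γ.Adj a) (Quot.mk Γ.Adj b))
      clear hsub
      induction heqv with
      | rel x y' hxy =>
        obtain ⟨e, he | he⟩ := hxy
        · exact ⟨(Walk.cons e true (Walk.nil _)).copy
            (by show (Γ.ends e).1 = x; rw [he]) (by show (Γ.ends e).2 = y'; rw [he])⟩
        · exact ⟨(Walk.cons e false (Walk.nil _)).copy
            (by show (Γ.ends e).2 = x; rw [he]) (by show (Γ.ends e).1 = y'; rw [he])⟩
      | refl x => exact ⟨.nil x⟩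
      | symm x y' h ihh => exact ⟨ihh.some.reverse⟩
      | trans x y' z h1 h2' ih1 ih2 => exact ⟨ih1.some.append ih2.some⟩
    obtain ⟨Wk⟩ := hwalk v v₀
    have hvW : v ∈ W.srcs := W.start_mem_srcs hW.1.1
    have hv₀ : v₀ ∈ C₀.srcs := C₀.start_mem_srcs hC₀.1.1
    obtain ⟨a', b', P, ha', hb', hPnd, hPne, hPS, hPT⟩ :=
      Walk.exists_path (S := (· ∈ W.srcs)) (T := (· ∈ C₀.srcs))
        (fun x hx hx' => hsh x hx hx') Wk hvW hv₀
    obtain ⟨Rw, hRwe, hRws⟩ := W.exists_rotate ha'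
    obtain ⟨Rc, hRce, hRcs⟩ := C₀.exists_rotate hb'
    have hRwU := unbal_of_perms hW hRwe hRws
    have hRcU := unbal_of_perms hC₀ hRce hRcs
    have hedgeW : ∀ e ∈ P.edges, e ∉ Rw.edges := by
      intro e heP heRw
      have heW : e ∈ W.edges := hRwe.subset heRw
      obtain ⟨h1', h2'⟩ := W.mem_verts_of_mem_edges heW
      have hv1 : (Γ.ends e).1 ∈ W.srcs := W.mem_srcs_of_mem_verts_closed hW.1.1 h1'
      have hv2 : (Γ.ends e).2 ∈ W.srcs := W.mem_srcs_of_mem_verts_closed hW.1.1 h2'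
      obtain ⟨hp1, hp2⟩ := P.mem_verts_of_mem_edges heP
      have e1 : (Γ.ends e).1 = a' := hPS _ hp1 hv1
      have e2 : (Γ.ends e).2 = a' := hPS _ hp2 hv2
      obtain ⟨d, hd⟩ := P.exists_step_of_mem_edges heP
      apply P.step_ne_of_nodup hPnd (e, d) hd
      show Γ.endpt e d = Γ.endpt e (!d)
      rcases Γ.endpt_or e d with h | h <;> rcases Γ.endpt_or e (!d) with h' | h' <;>
        simp only [h, h', e1, e2]
    have hedgeC : ∀ e ∈ P.edges, e ∉ Rc.edges := by
      intro e heP heRc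
      have heC : e ∈ C₀.edges := hRce.subset heRc
      obtain ⟨h1', h2'⟩ := C₀.mem_verts_of_mem_edges heC
      have hv1 : (Γ.ends e).1 ∈ C₀.srcs := C₀.mem_srcs_of_mem_verts_closed hC₀.1.1 h1'
      have hv2 : (Γ.ends e).2 ∈ C₀.srcs := C₀.mem_srcs_of_mem_verts_closed hC₀.1.1 h2'
      obtain ⟨hp1, hp2⟩ := P.mem_verts_of_mem_edges heP
      have e1 : (Γ.ends e).1 = b' := hPT _ hp1 hv1
      have e2 : (Γ.ends e).2 = b' := hPT _ hp2 hv2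
      obtain ⟨d, hd⟩ := P.exists_step_of_mem_edges heP
      apply P.step_ne_of_nodup hPnd (e, d) hd
      show Γ.endpt e d = Γ.endpt e (!d)
      rcases Γ.endpt_or e d with h | h <;> rcases Γ.endpt_or e (!d) with h' | h' <;>
        simp only [h, h', e1, e2]
    have hLH : Γ.IsLooseHandcuff Rw P Rc := by
      refine ⟨hRwU, hRcU, ⟨hPne, hPnd⟩, ?_, ?_, ?_, ?_⟩
      · intro x hx hx'
        exact hsh x (hRws.subset hx) (hRcs.subset hx')
      · intro x hx hx'
        exact hPS x hx (hRws.subset hx')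
      · intro x hx hx'
        exact hPT x hx (hRcs.subset hx')
      · intro e he
        exact ⟨hedgeW e he, hedgeC e he⟩
    have hsum := sum_loose hcirc h2 hLH
    have hfin := eq_of_add_eq_zero2 h2 hsum
    rw [← Walk.edgeSum_congr_perm g hRwe, ← Walk.edgeSum_congr_perm g hRce]
    exact hfin

end Statement
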